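/- Fix integers n ≥ 1 and m ≥ 1, let I = (Fin m → Fin n) and D = n^m. For a tuple σ : Fin m → Equiv.Perm (Fin n), let Π_σ : Equiv.Perm I be the blockwise permutation x ↦ (fun b => σ b (x b)) and P_σ : Matrix I I ℂ its permutation matrix. Then for every matrix U in the unitary group of Matrix I I ℂ, every target basis label x* : I, and every vector φ : I → ℂ with Σ_x ‖φ x‖² = 1, there exists a tuple of permutations σ* such that ‖(((P_{σ*})ᴴ · U) *ᵥ φ) x*‖² ≥ 1/n^m. -/

import Mathlib

open Matrix

/-- Existence of a uniform overlap lower bound via block permutations: for any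
unitary `U`, target basis label `x*`, and unit vector `φ`, some blockwise
relabeling `σ*` achieves overlap probability at least `1/n^m`. -/
theorem exists_blockwise_permutation_overlap (n m : ℕ) (hn : 1 ≤ n) (hm : 1 ≤ m)
    (P : (Fin m → Equiv.Perm (Fin n)) →
      Matrix (Fin m → Fin n) (Fin m → Fin n) ℂ)
    (hP : ∀ σ x y, P σ x y = if x = (fun b => σ b (y b)) then 1 else 0)
    (U : Matrix.unitaryGroup (Fin m → Fin n) ℂ) (xstar : Fin m → Fin n)
    (φ : (Fin m → Fin n) → ℂ) (hφ : ∑ x, ‖φ x‖ ^ 2 = 1) :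
    ∃ σstar : Fin m → Equiv.Perm (Fin n),
      (((n : ℝ)) ^ m)⁻¹ ≤
        ‖((((P σstar)ᴴ * (U : Matrix (Fin m → Fin n) (Fin m → Fin n) ℂ)) *ᵥ φ) xstar)‖ ^ 2 := by
  set ψ : (Fin m → Fin n) → ℂ := (U : Matrix (Fin m → Fin n) (Fin m → Fin n) ℂ) *ᵥ φ with hψ
  -- ψ is a unit vector
  have hUnit : star (U : Matrix (Fin m → Fin n) (Fin m → Fin n) ℂ) * U = 1 :=
    U.2.1
  have hdot : star ψ ⬝ᵥ ψ = star φ ⬝ᵥ φ := by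
    rw [hψ, Matrix.star_mulVec, Matrix.dotProduct_mulVec, Matrix.vecMul_vecMul]
    have : star φ ᵥ* ((U : Matrix (Fin m → Fin n) (Fin m → Fin n) ℂ)ᴴ *
        (U : Matrix (Fin m → Fin n) (Fin m → Fin n) ℂ)) = star φ := by
      rw [show ((U : Matrix (Fin m → Fin n) (Fin m → Fin n) ℂ)ᴴ) =
        star (U : Matrix (Fin m → Fin n) (Fin m → Fin n) ℂ) from rfl, hUnit,
        Matrix.vecMul_one]
    rw [this]
  have hsum : ∑ x, ‖ψ x‖ ^ 2 = 1 := by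
    have h1 : ∀ (v : (Fin m → Fin n) → ℂ), ∑ x, ‖v x‖ ^ 2 = (star v ⬝ᵥ v).re := by
      intro v
      simp only [dotProduct, Pi.star_apply, Complex.star_def]
      rw [Complex.re_sum]
      refine Finset.sum_congr rfl fun x _ => ?_
      rw [mul_comm, Complex.mul_conj, Complex.ofReal_re, ← Complex.sq_norm]
    rw [h1, hdot, ← h1, hφ]
  -- pigeonhole
  have hcard : (Finset.univ : Finset (Fin m → Fin n)).card = n ^ m := by
    simp [Fintype.card_fun]
  have hpos : (0:ℝ) < (n:ℝ) ^ m := by positivity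
  haveI : NeZero n := ⟨by omega⟩
  obtain ⟨y, -, hy⟩ : ∃ y ∈ (Finset.univ : Finset (Fin m → Fin n)),
      ((n : ℝ) ^ m)⁻¹ ≤ ‖ψ y‖ ^ 2 := by
    by_contra h
    push_neg at h
    have : ∑ x, ‖ψ x‖ ^ 2 < ∑ _x : Fin m → Fin n, ((n : ℝ) ^ m)⁻¹ := by
      apply Finset.sum_lt_sum_of_nonempty
      · exact Finset.univ_nonempty
      · intro i hi; exact h i hi
    rw [hsum, Finset.sum_const, hcard, nsmul_eq_mul] at this
    rw [Nat.cast_pow] at this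
    rw [mul_inv_cancel₀ (ne_of_gt hpos)] at this
    exact lt_irrefl _ this
  refine ⟨fun b => Equiv.swap (xstar b) (y b), ?_⟩
  have hval : ((((P fun b => Equiv.swap (xstar b) (y b))ᴴ *
      (U : Matrix (Fin m → Fin n) (Fin m → Fin n) ℂ)) *ᵥ φ) xstar) = ψ y := by
    rw [← Matrix.mulVec_mulVec, ← hψ]
    have : ∀ z, ((P fun b => Equiv.swap (xstar b) (y b))ᴴ) xstar z =
        if z = y then 1 else 0 := by
      intro z
      rw [Matrix.conjTranspose_apply, hP]
      have : (z = fun b => Equiv.swap (xstar b) (y b) (xstar b)) ↔ (z = y) := by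
        constructor <;> intro h <;> funext b <;> have := congrFun h b <;>
          simpa [Equiv.swap_apply_left] using this
      split_ifs with h1 h2 h2 <;> simp_all
    rw [Matrix.mulVec]
    simp only [dotProduct, this, ite_mul, one_mul, zero_mul]
    simp
  rw [hval]
  exact hy
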